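/- Let a ≠ 1 and α := b x_{-1} x_0 admissible (α ≠ a^n(a-1)/(1-a^n) for all n ≥ 1). Then for every admissible solution, x_{2k+2} = x_0 ∏_{i=0}^{k} h(2i+1) and x_{2k+1} = x_{-1} ∏_{i=0}^{k} h(2i) for all k ≥ 0, where h(n) = (a^n(1-a) + α(1-a^n))/(a^{n+1}(1-a) + α(1-a^{n+1})). -/

import Mathlib

noncomputable def Pfun (a α : ℝ) (n : ℕ) : ℝ := a ^ n * (1 - a) + α * (1 - a ^ n)

theorem stmt_7 (a b : ℝ) (x : ℤ → ℝ) (α : ℝ) (h : ℕ → ℝ)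
    (ha : a ≠ 1)
    (halpha : α = b * x (-1) * x 0)
    (hadm : ∀ n : ℕ, 1 ≤ n → α ≠ a ^ n * (a - 1) / (1 - a ^ n))
    (hh : ∀ n : ℕ, h n =
      (a ^ n * (1 - a) + α * (1 - a ^ n)) / (a ^ (n + 1) * (1 - a) + α * (1 - a ^ (n + 1))))
    (hrec : ∀ n : ℕ, x ((n : ℤ) + 1) = x ((n : ℤ) - 1) / (a + b * x (n : ℤ) * x ((n : ℤ) - 1))) :
    ∀ k : ℕ,
      x (2 * (k : ℤ) + 2) = x 0 * ∏ i ∈ Finset.range (k + 1), h (2 * i + 1) ∧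
      x (2 * (k : ℤ) + 1) = x (-1) * ∏ i ∈ Finset.range (k + 1), h (2 * i) := by
  have ha1 : (1 : ℝ) - a ≠ 0 := sub_ne_zero.mpr (fun hh => ha hh.symm)
  -- P is never zero
  have hP : ∀ n : ℕ, Pfun a α n ≠ 0 := by
    intro n
    cases n with
    | zero => simp [Pfun, ha1]
    | succ m =>
      by_cases h1 : a ^ (m + 1) = 1
      · simp [Pfun, h1, ha1]
      · intro hz
        have h1' : (1 : ℝ) - a ^ (m + 1) ≠ 0 := sub_ne_zero.mpr (fun hh => h1 hh.symm)
        apply hadm (m + 1) (Nat.le_add_left 1 m)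
        have : α * (1 - a ^ (m + 1)) = a ^ (m + 1) * (a - 1) := by
          unfold Pfun at hz; linarith [hz]
        field_simp
        linarith [this]
  -- invariant: b x_n x_{n-1} = α (1-a) / P n
  have hy : ∀ n : ℕ, b * x (n : ℤ) * x ((n : ℤ) - 1) = α * (1 - a) / Pfun a α n := by
    intro n
    induction n with
    | zero =>
      simp only [Pfun, pow_zero]
      rw [show ((0:ℕ):ℤ) - 1 = -1 by norm_num]
      field_simp
      rw [halpha]; simp only [sub_self, mul_zero, add_zero, one_mul]; field_simp [ha1]; ring
    | succ m ih =>
      have ht : a + b * x (m : ℤ) * x ((m : ℤ) - 1) = Pfun a α (m + 1) / Pfun a α m := by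
        rw [ih]
        field_simp [hP m]
        simp only [Pfun]; ring
      have e1 : ((m + 1 : ℕ) : ℤ) = (m : ℤ) + 1 := by push_cast; ring
      rw [e1, show (m : ℤ) + 1 - 1 = (m : ℤ) by ring, hrec m, ht]
      rw [div_div_eq_mul_div]
      have hxm : b * (x ((m : ℤ) - 1) * (Pfun a α m / Pfun a α (m + 1))) * x (m : ℤ)
          = α * (1 - a) / Pfun a α (m + 1) := by
        rw [show b * (x ((m : ℤ) - 1) * (Pfun a α m / Pfun a α (m + 1))) * x (m : ℤ)
            = (b * x (m : ℤ) * x ((m : ℤ) - 1)) * (Pfun a α m / Pfun a α (m + 1)) by ring, ih]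
        field_simp [hP m, hP (m + 1)]
      calc b * (x ((m : ℤ) - 1) * Pfun a α m / Pfun a α (m + 1)) * x (m : ℤ)
          = b * (x ((m : ℤ) - 1) * (Pfun a α m / Pfun a α (m + 1))) * x (m : ℤ) := by ring
        _ = α * (1 - a) / Pfun a α (m + 1) := hxm
  -- step: x_{n+1} = x_{n-1} * h n
  have hx : ∀ n : ℕ, x ((n : ℤ) + 1) = x ((n : ℤ) - 1) * h n := by
    intro n
    have ht : a + b * x (n : ℤ) * x ((n : ℤ) - 1) = Pfun a α (n + 1) / Pfun a α n := by
      rw [hy n]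
      field_simp [hP n]
      simp only [Pfun]; ring
    rw [hrec n, ht, hh n]
    rw [div_div_eq_mul_div]
    unfold Pfun
    field_simp
  intro k
  induction k with
  | zero =>
    constructor
    · have h2 := hx 1
      have h1 := hx 0
      norm_num at h1 h2
      rw [show (2 : ℤ) * ((0:ℕ):ℤ) + 2 = 2 by norm_num]
      simp [h2]
    · have h1 := hx 0
      norm_num at h1
      rw [show (2 : ℤ) * ((0:ℕ):ℤ) + 1 = 1 by norm_num]
      simp [h1]
  | succ m ih =>
    obtain ⟨ih1, ih2⟩ := ih
    constructor
    · have h2 := hx (2 * m + 3)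
      push_cast at h2
      have h2' : x (2 * (m:ℤ) + 4) = x (2 * (m:ℤ) + 2) * h (2 * m + 3) := by
        rw [show 2 * (m:ℤ) + 4 = 2 * (m:ℤ) + 3 + 1 by ring,
            show 2 * (m:ℤ) + 2 = 2 * (m:ℤ) + 3 - 1 by ring]
        exact h2
      rw [show (2 * ((m + 1 : ℕ) : ℤ) + 2) = 2 * (m:ℤ) + 4 by push_cast; ring]
      rw [h2', ih1]
      conv_rhs => rw [Finset.prod_range_succ]
      rw [show 2 * (m + 1) + 1 = 2 * m + 3 by ring]
      ring
    · have h2 := hx (2 * m + 2)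
      push_cast at h2
      have h2' : x (2 * (m:ℤ) + 3) = x (2 * (m:ℤ) + 1) * h (2 * m + 2) := by
        rw [show 2 * (m:ℤ) + 3 = 2 * (m:ℤ) + 2 + 1 by ring,
            show 2 * (m:ℤ) + 1 = 2 * (m:ℤ) + 2 - 1 by ring]
        exact h2
      rw [show (2 * ((m + 1 : ℕ) : ℤ) + 1) = 2 * (m:ℤ) + 3 by push_cast; ring]
      rw [h2', ih2]
      conv_rhs => rw [Finset.prod_range_succ]
      rw [show 2 * (m + 1) = 2 * m + 2 by ring]
      ring
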